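/- arXiv:1705.08400 — 3 statements merged into one kernel-verified Lean document; each statement's English description precedes it below -/
import Mathlib

section
/- Let (Ω, μ) be a measure space, let E be a finite-dimensional real inner product space, let K be a linear subspace of L²(μ; E), let B₁, …, B_k be pairwise disjoint measurable subsets of Ω, and let ψ₁, …, ψ_k ∈ L²(μ; E) be such that ψ_j vanishes almost everywhere outside B_j. Suppose there is N > 0 such that for every j and every σ ∈ K one has ∫_{B_j} ‖ψ_j + σ‖²_E dμ ≥ N. Then for all real numbers β₁, …, β_k and every σ ∈ K, ‖Σ_{j=1}^k β_j ψ_j + σ‖²_{L²(μ;E)} ≥ N · Σ_{j=1}^k β_j². In particular, if in addition K is a subspace containing no nonzero element of the span of the ψ_j, the classes of ψ₁, …, ψ_k are linearly independent modulo K. -/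
open MeasureTheory
open scoped ENNReal

private lemma Lp_coeFn_sum' {α E : Type*} [MeasurableSpace α] {μ : Measure α}
    [NormedAddCommGroup E] {p : ℝ≥0∞} {ι : Type*} (s : Finset ι) (f : ι → Lp E p μ) :
    ⇑(∑ i ∈ s, f i) =ᵐ[μ] fun x => ∑ i ∈ s, f i x := by
  classical
  induction s using Finset.induction_on with
  | empty => simp only [Finset.sum_empty]; exact Lp.coeFn_zero E p μ
  | @insert a s h ih =>
    have hfun : (fun x => ∑ i ∈ insert a s, f i x) = fun x => f a x + ∑ i ∈ s, f i x := by
      funext x; rw [Finset.sum_insert h]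
    rw [hfun, Finset.sum_insert h]
    filter_upwards [Lp.coeFn_add (f a) (∑ i ∈ s, f i), ih] with x hx hx'
    rw [hx, Pi.add_apply, hx']

/-- Disjoint-support lower bound: if `ψ₁, …, ψ_k ∈ L²(μ; E)` are supported (a.e.) in
pairwise disjoint measurable sets `B_j`, and for every `j` and every `σ` in a subspace
`K ⊆ L²(μ; E)` one has `∫_{B_j} ‖ψ_j + σ‖² dμ ≥ N` with `N > 0`, then for all scalars `β_j`
and all `σ ∈ K`, `‖∑ β_j ψ_j + σ‖² ≥ N ∑ β_j²`.  In particular, if `K` contains no nonzero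
element of the span of the `ψ_j`, the classes of the `ψ_j` in `L²(μ;E)/K` are linearly
independent. -/
theorem disjoint_support_quotient_lower_bound
    {Ω : Type*} [MeasurableSpace Ω] (μ : Measure Ω)
    {E : Type*} [NormedAddCommGroup E] [InnerProductSpace ℝ E] [FiniteDimensional ℝ E]
    (K : Submodule ℝ (Lp E 2 μ)) {k : ℕ} (B : Fin k → Set Ω)
    (hBmeas : ∀ j, MeasurableSet (B j))
    (hBdisj : ∀ i j, i ≠ j → Disjoint (B i) (B j))
    (ψ : Fin k → Lp E 2 μ)
    (hsupp : ∀ j, ∀ᵐ x ∂μ, x ∉ B j → ψ j x = 0)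
    (N : ℝ) (hN : 0 < N)
    (hlow : ∀ j, ∀ σ ∈ K, N ≤ ∫ x in B j, ‖(ψ j + σ) x‖ ^ 2 ∂μ) :
    (∀ (β : Fin k → ℝ), ∀ σ ∈ K,
        N * ∑ j, (β j) ^ 2 ≤ ‖(∑ j, β j • ψ j) + σ‖ ^ 2) ∧
      ((∀ v ∈ Submodule.span ℝ (Set.range ψ), v ∈ K → v = 0) →
        LinearIndependent ℝ fun j => (Submodule.Quotient.mk (ψ j) : Lp E 2 μ ⧸ K)) := by
  have key : ∀ (β : Fin k → ℝ), ∀ σ ∈ K,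
      N * ∑ j, (β j) ^ 2 ≤ ‖(∑ j, β j • ψ j) + σ‖ ^ 2 := by
    intro β σ hσ
    set f : Lp E 2 μ := (∑ j, β j • ψ j) + σ with hfdef
    have hcoe : ∀ᵐ x ∂μ, f x = (∑ j, β j • (ψ j x)) + σ x := by
      filter_upwards [Lp.coeFn_add (∑ j, β j • ψ j) σ,
        Lp_coeFn_sum' Finset.univ (fun j => β j • ψ j),
        ae_all_iff.2 (fun j => Lp.coeFn_smul (β j) (ψ j))] with x h1 h2 h3
      have : f x = (∑ j, β j • ψ j : Lp E 2 μ) x + σ x := h1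
      rw [this, h2]
      congr 1
      exact Finset.sum_congr rfl fun j _ => h3 j
    have hint : Integrable (fun x => ‖f x‖ ^ 2) μ := by
      have := L2.integrable_inner (𝕜 := ℝ) f f
      simpa [real_inner_self_eq_norm_sq] using this
    have hns : ‖f‖ ^ 2 = ∫ x, ‖f x‖ ^ 2 ∂μ := by
      rw [InnerProductSpace.norm_sq_eq_re_inner (𝕜 := ℝ) f, L2.inner_def]
      simp [real_inner_self_eq_norm_sq]
    have hsplit : ∑ j, ∫ x in B j, ‖f x‖ ^ 2 ∂μ ≤ ∫ x, ‖f x‖ ^ 2 ∂μ := by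
      rw [← integral_biUnion_finset Finset.univ (fun i _ => hBmeas i)
        (fun i _ j _ hij => hBdisj i j hij) (fun i _ => hint.integrableOn)]
      exact setIntegral_le_integral hint (ae_of_all _ fun x => by positivity)
    have hj : ∀ j, N * (β j) ^ 2 ≤ ∫ x in B j, ‖f x‖ ^ 2 ∂μ := by
      intro j
      by_cases hβ : β j = 0
      · have h0 : (0:ℝ) ≤ ∫ x in B j, ‖f x‖ ^ 2 ∂μ :=
          setIntegral_nonneg (hBmeas j) fun x _ => by positivity
        simpa [hβ] using h0
      · set σ' : Lp E 2 μ := (β j)⁻¹ • σ with hσ'def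
        have hσ'K : σ' ∈ K := K.smul_mem _ hσ
        have hlowj := hlow j σ' hσ'K
        have hae : ∀ᵐ x ∂μ, x ∈ B j → ‖f x‖ ^ 2 = (β j) ^ 2 * ‖(ψ j + σ') x‖ ^ 2 := by
          filter_upwards [hcoe, Lp.coeFn_add (ψ j) σ', Lp.coeFn_smul ((β j)⁻¹) σ,
            ae_all_iff.2 hsupp] with x h1 h2 h3 h4 hx
          have hzero : ∀ i, i ≠ j → ψ i x = 0 := fun i hij =>
            h4 i fun hxi => Set.disjoint_left.mp (hBdisj i j hij) hxi hx
          have hfx : f x = β j • ψ j x + σ x := by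
            rw [h1, Finset.sum_eq_single j (fun i _ hij => by rw [hzero i hij, smul_zero])
              (fun h => absurd (Finset.mem_univ j) h)]
          have hψσ' : (ψ j + σ') x = ψ j x + (β j)⁻¹ • σ x := by
            rw [h2, Pi.add_apply, h3, Pi.smul_apply]
          have hrw : f x = β j • ((ψ j + σ') x) := by
            rw [hψσ', smul_add, smul_smul, mul_inv_cancel₀ hβ, one_smul, hfx]
          rw [hrw, norm_smul, mul_pow, Real.norm_eq_abs, sq_abs]
        calc N * (β j) ^ 2 = (β j) ^ 2 * N := mul_comm _ _
          _ ≤ (β j) ^ 2 * ∫ x in B j, ‖(ψ j + σ') x‖ ^ 2 ∂μ :=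
              mul_le_mul_of_nonneg_left hlowj (sq_nonneg _)
          _ = ∫ x in B j, (β j) ^ 2 * ‖(ψ j + σ') x‖ ^ 2 ∂μ := (integral_const_mul _ _).symm
          _ = ∫ x in B j, ‖f x‖ ^ 2 ∂μ :=
              (setIntegral_congr_ae (hBmeas j) hae).symm
    calc N * ∑ j, (β j) ^ 2 = ∑ j, N * (β j) ^ 2 := Finset.mul_sum _ _ _
      _ ≤ ∑ j, ∫ x in B j, ‖f x‖ ^ 2 ∂μ := Finset.sum_le_sum fun j _ => hj j
      _ ≤ ∫ x, ‖f x‖ ^ 2 ∂μ := hsplit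
      _ = ‖f‖ ^ 2 := hns.symm
  refine ⟨key, fun _hspan => ?_⟩
  rw [Fintype.linearIndependent_iff]
  intro c hc
  have hv : (∑ j, c j • ψ j) ∈ K := by
    rw [← Submodule.Quotient.mk_eq_zero]
    have h2 : K.mkQ (∑ j, c j • ψ j) = 0 := by
      rw [map_sum]
      simp only [_root_.map_smul, Submodule.mkQ_apply]
      exact hc
    exact h2
  have h0 := key c (-(∑ j, c j • ψ j)) (K.neg_mem hv)
  simp only [add_neg_cancel, norm_zero] at h0
  have hsum0 : ∑ j, (c j) ^ 2 = 0 := by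
    have hnn : (0:ℝ) ≤ ∑ j, (c j) ^ 2 := Finset.sum_nonneg fun j _ => sq_nonneg _
    nlinarith
  intro i
  have := (Finset.sum_eq_zero_iff_of_nonneg fun j _ => sq_nonneg (c j)).mp hsum0 i
    (Finset.mem_univ i)
  exact (pow_eq_zero_iff two_ne_zero).mp this
end

section
/- Let (Ω, μ) be a measure space, let E and F be finite-dimensional real inner product spaces, let D be a linear subspace of L²(μ; E), let d : D → L²(μ; F) be a linear map with kernel K, and let B₁, …, B_k be pairwise disjoint measurable subsets of Ω. Suppose ψ₁, …, ψ_k ∈ D are such that ψ_j and dψ_j vanish almost everywhere outside B_j, and there are constants E₀ ≥ 0 and N > 0 such that ‖dψ_j‖² ≤ E₀ for every j, and for every j and every σ ∈ K one has ∫_{B_j} ‖ψ_j + σ‖²_E dμ ≥ N. Then the classes of ψ₁, …, ψ_k in D/K are linearly independent, and λ_k(d) ≤ E₀/N. -/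
open MeasureTheory
open scoped ENNReal

/-- The `k`-th min-max value of a linear map `d` defined on a subspace `D` of an inner
product space `H`, with values in an inner product space `G`. -/
noncomputable def minMaxValue {H G : Type*} [NormedAddCommGroup H] [InnerProductSpace ℝ H]
    [NormedAddCommGroup G] [InnerProductSpace ℝ G] {D : Submodule ℝ H}
    (d : D →ₗ[ℝ] G) (k : ℕ) : ℝ≥0∞ :=
  ⨅ (V : Submodule ℝ D) (_ : FiniteDimensional ℝ V ∧ Module.finrank ℝ ↥V = k ∧
      ∀ ψ ∈ V, (ψ : H) ∈ closure (((LinearMap.ker d).map D.subtype : Submodule ℝ H) : Set H)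
        → ψ = 0),
    ⨆ (ψ : D) (_ : ψ ∈ V ∧ ψ ≠ 0),
      ENNReal.ofReal (‖d ψ‖ ^ 2 /
        (Metric.infDist (ψ : H)
          (((LinearMap.ker d).map D.subtype : Submodule ℝ H) : Set H)) ^ 2)

lemma lp_coeFn_finsetSum {Ω E : Type*} [MeasurableSpace Ω] {μ : Measure Ω}
    [NormedAddCommGroup E] {p : ℝ≥0∞} {ι : Type*} (s : Finset ι) (f : ι → Lp E p μ) :
    ⇑(∑ i ∈ s, f i) =ᵐ[μ] fun x => ∑ i ∈ s, f i x := by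
  classical
  induction s using Finset.induction_on with
  | empty => simp only [Finset.sum_empty]; exact Lp.coeFn_zero E p μ
  | @insert a s h ih =>
    rw [Finset.sum_insert h]
    filter_upwards [Lp.coeFn_add (f a) (∑ i ∈ s, f i), ih] with x hx hx2
    rw [hx]
    simp only [Pi.add_apply, hx2, Finset.sum_insert h]

lemma l2_norm_sq_eq {Ω E : Type*} [MeasurableSpace Ω] {μ : Measure Ω}
    [NormedAddCommGroup E] [InnerProductSpace ℝ E] (f : Lp E 2 μ) :
    ‖f‖ ^ 2 = ∫ x, ‖f x‖ ^ 2 ∂μ := by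
  have h := MeasureTheory.L2.inner_def (𝕜 := ℝ) f f
  simp_rw [real_inner_self_eq_norm_sq] at h
  exact h

lemma l2_integrable_norm_sq {Ω E : Type*} [MeasurableSpace Ω] {μ : Measure Ω}
    [NormedAddCommGroup E] [InnerProductSpace ℝ E] (f : Lp E 2 μ) :
    Integrable (fun x => ‖f x‖ ^ 2) μ := by
  have h := MeasureTheory.L2.integrable_inner (𝕜 := ℝ) f f
  simpa [real_inner_self_eq_norm_sq] using h

set_option maxHeartbeats 1000000 in
/-- Test forms `ψ₁, …, ψ_k` in the domain `D ⊆ L²(μ; E)` of `d : D → L²(μ; F)`, supported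
with their differentials in pairwise disjoint measurable sets `B_j`, with energies
`‖dψ_j‖² ≤ E₀` and quotient norms bounded below by `∫_{B_j} ‖ψ_j + σ‖² dμ ≥ N > 0` for all
`σ ∈ Ker d`, give linearly independent classes modulo `Ker d` and the eigenvalue bound
`λ_k(d) ≤ E₀ / N`. -/
theorem minMaxValue_le_of_disjoint_test_forms
    {Ω : Type*} [MeasurableSpace Ω] (μ : Measure Ω)
    {E F : Type*} [NormedAddCommGroup E] [InnerProductSpace ℝ E] [FiniteDimensional ℝ E]
    [NormedAddCommGroup F] [InnerProductSpace ℝ F] [FiniteDimensional ℝ F]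
    {D : Submodule ℝ (Lp E 2 μ)} (d : D →ₗ[ℝ] Lp F 2 μ)
    {k : ℕ} (B : Fin k → Set Ω)
    (hBmeas : ∀ j, MeasurableSet (B j))
    (hBdisj : ∀ i j, i ≠ j → Disjoint (B i) (B j))
    (ψ : Fin k → D)
    (hsupp : ∀ j, ∀ᵐ x ∂μ, x ∉ B j → (ψ j : Lp E 2 μ) x = 0)
    (hdsupp : ∀ j, ∀ᵐ x ∂μ, x ∉ B j → d (ψ j) x = 0)
    (E₀ N : ℝ) (hE₀ : 0 ≤ E₀) (hN : 0 < N)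
    (henergy : ∀ j, ‖d (ψ j)‖ ^ 2 ≤ E₀)
    (hlow : ∀ j, ∀ σ ∈ LinearMap.ker d,
      N ≤ ∫ x in B j, ‖((ψ j + σ : D) : Lp E 2 μ) x‖ ^ 2 ∂μ) :
    (LinearIndependent ℝ fun j =>
        (Submodule.Quotient.mk (ψ j) : D ⧸ LinearMap.ker d)) ∧
      minMaxValue d k ≤ ENNReal.ofReal (E₀ / N) := by
  classical
  set K : Submodule ℝ (Lp E 2 μ) := (LinearMap.ker d).map D.subtype with hK
  -- a.e. pointwise description of the coercion of a combination
  have hcoe : ∀ (c : Fin k → ℝ) (σ : D),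
      ((((∑ j, c j • ψ j) + σ : D) : Lp E 2 μ) : Ω → E)
        =ᵐ[μ] fun x => ∑ j, c j • ((ψ j : Lp E 2 μ) x) + (σ : Lp E 2 μ) x := by
    intro c σ
    have h1 : (((∑ j, c j • ψ j) + σ : D) : Lp E 2 μ)
        = ∑ j, c j • ((ψ j : Lp E 2 μ)) + (σ : Lp E 2 μ) := by
      push_cast
      rfl
    rw [h1]
    have h3 : ∀ᵐ x ∂μ, ∀ j : Fin k,
        (⇑(c j • (ψ j : Lp E 2 μ)) : Ω → E) x = c j • ((ψ j : Lp E 2 μ) x) :=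
      ae_all_iff.2 fun j => Lp.coeFn_smul (c j) (ψ j : Lp E 2 μ)
    filter_upwards [Lp.coeFn_add (∑ j, c j • ((ψ j : Lp E 2 μ))) (σ : Lp E 2 μ),
      lp_coeFn_finsetSum Finset.univ (fun j => c j • ((ψ j : Lp E 2 μ))), h3] with x hx h2x h3x
    rw [hx]
    simp only [Pi.add_apply, h2x, h3x]
  -- key lower bound
  have key : ∀ (c : Fin k → ℝ) (σ : D), σ ∈ LinearMap.ker d →
      N * ∑ j, c j ^ 2 ≤ ‖(((∑ j, c j • ψ j) + σ : D) : Lp E 2 μ)‖ ^ 2 := by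
    intro c σ hσ
    set f : Lp E 2 μ := (((∑ j, c j • ψ j) + σ : D) : Lp E 2 μ) with hf
    have hint : Integrable (fun x => ‖f x‖ ^ 2) μ := l2_integrable_norm_sq f
    have hnonneg : 0 ≤ᵐ[μ] fun x => ‖f x‖ ^ 2 :=
      Filter.Eventually.of_forall fun x => sq_nonneg _
    have hperj : ∀ j, N * c j ^ 2 ≤ ∫ x in B j, ‖f x‖ ^ 2 ∂μ := by
      intro j
      by_cases hc : c j = 0
      · simpa [hc] using setIntegral_nonneg (hBmeas j) fun x _ => sq_nonneg ‖f x‖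
      · set τ : D := (c j)⁻¹ • σ with hτdef
        have hτ : τ ∈ LinearMap.ker d := Submodule.smul_mem _ _ hσ
        have hψτ : (((ψ j + τ : D) : Lp E 2 μ) : Ω → E)
            =ᵐ[μ] fun x => (ψ j : Lp E 2 μ) x + (c j)⁻¹ • ((σ : Lp E 2 μ) x) := by
          have h1 : ((ψ j + τ : D) : Lp E 2 μ)
              = (ψ j : Lp E 2 μ) + (c j)⁻¹ • (σ : Lp E 2 μ) := by push_cast; rfl
          rw [h1]
          filter_upwards [Lp.coeFn_add (ψ j : Lp E 2 μ) ((c j)⁻¹ • (σ : Lp E 2 μ)),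
            Lp.coeFn_smul ((c j)⁻¹) (σ : Lp E 2 μ)] with x h1 h2
          rw [h1]
          simp only [Pi.add_apply, Pi.smul_apply, h2]
        have hae : ∀ᵐ x ∂μ, x ∈ B j →
            ‖f x‖ ^ 2 = c j ^ 2 * ‖((ψ j + τ : D) : Lp E 2 μ) x‖ ^ 2 := by
          have hs : ∀ᵐ x ∂μ, ∀ i, x ∉ B i → (ψ i : Lp E 2 μ) x = 0 := ae_all_iff.2 hsupp
          filter_upwards [hcoe c σ, hψτ, hs] with x h1 h2 h3 hxB
          have hvanish : ∀ i, i ≠ j → (ψ i : Lp E 2 μ) x = 0 := fun i hi =>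
            h3 i fun hxi => Set.disjoint_left.1 (hBdisj i j hi) hxi hxB
          have hfx : f x = c j • ((ψ j : Lp E 2 μ) x) + (σ : Lp E 2 μ) x := by
            rw [h1]
            congr 1
            rw [Finset.sum_eq_single j (fun i _ hi => by rw [hvanish i hi, smul_zero])
              (by simp)]
          have hfact : c j • ((ψ j : Lp E 2 μ) x) + (σ : Lp E 2 μ) x
              = c j • ((ψ j : Lp E 2 μ) x + (c j)⁻¹ • ((σ : Lp E 2 μ) x)) := by
            rw [smul_add, smul_inv_smul₀ hc]
          rw [hfx, h2, hfact, norm_smul, mul_pow, Real.norm_eq_abs, sq_abs]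
        have heq : ∫ x in B j, ‖f x‖ ^ 2 ∂μ
            = c j ^ 2 * ∫ x in B j, ‖((ψ j + τ : D) : Lp E 2 μ) x‖ ^ 2 ∂μ := by
          rw [setIntegral_congr_ae (hBmeas j) hae, integral_const_mul]
        rw [heq]
        calc N * c j ^ 2 = c j ^ 2 * N := mul_comm _ _
          _ ≤ c j ^ 2 * ∫ x in B j, ‖((ψ j + τ : D) : Lp E 2 μ) x‖ ^ 2 ∂μ :=
              mul_le_mul_of_nonneg_left (hlow j τ hτ) (sq_nonneg _)
    have hsum : ∑ j, ∫ x in B j, ‖f x‖ ^ 2 ∂μ ≤ ∫ x, ‖f x‖ ^ 2 ∂μ := by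
      rw [← integral_iUnion_fintype hBmeas (fun i j hij => hBdisj i j hij)
        (fun j => hint.integrableOn)]
      exact setIntegral_le_integral hint hnonneg
    calc N * ∑ j, c j ^ 2 = ∑ j, N * c j ^ 2 := Finset.mul_sum _ _ _
      _ ≤ ∑ j, ∫ x in B j, ‖f x‖ ^ 2 ∂μ := Finset.sum_le_sum fun j _ => hperj j
      _ ≤ ∫ x, ‖f x‖ ^ 2 ∂μ := hsum
      _ = ‖f‖ ^ 2 := (l2_norm_sq_eq f).symm
  -- coefficients vanish when the quantity is nonpositive
  have csqzero : ∀ c : Fin k → ℝ, N * ∑ j, c j ^ 2 ≤ 0 → ∀ j, c j = 0 := by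
    intro c h j
    have hs : 0 ≤ ∑ j, c j ^ 2 := Finset.sum_nonneg fun j _ => sq_nonneg _
    have hsum0 : ∑ j, c j ^ 2 = 0 := le_antisymm (by nlinarith) hs
    have := (Finset.sum_eq_zero_iff_of_nonneg fun i _ => sq_nonneg (c i)).1 hsum0 j
      (Finset.mem_univ j)
    exact pow_eq_zero_iff (n := 2) (by norm_num) |>.1 this
  -- membership in ker of a combination forces zero coefficients
  have hzero : ∀ c : Fin k → ℝ, (∑ j, c j • ψ j) ∈ LinearMap.ker d → ∀ j, c j = 0 := by
    intro c hc
    have h1 := key c (-(∑ j, c j • ψ j)) (neg_mem hc)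
    simp only [add_neg_cancel] at h1
    refine csqzero c ?_
    simpa using h1
  -- linear independence in the quotient
  have hindquot : LinearIndependent ℝ fun j =>
      (Submodule.Quotient.mk (ψ j) : D ⧸ LinearMap.ker d) := by
    rw [Fintype.linearIndependent_iff]
    intro c hc
    have hc' : (LinearMap.ker d).mkQ (∑ j, c j • ψ j) = 0 := by
      rw [map_sum]
      simpa only [_root_.map_smul, Submodule.mkQ_apply] using hc
    rw [← LinearMap.mem_ker, Submodule.ker_mkQ] at hc'
    exact hzero c hc'
  have hindD : LinearIndependent ℝ ψ := by
    apply LinearIndependent.of_comp (LinearMap.ker d).mkQ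
    exact hindquot
  -- distance lower bound
  have hKne : (K : Set (Lp E 2 μ)).Nonempty := ⟨0, K.zero_mem⟩
  have hdist : ∀ c : Fin k → ℝ,
      Real.sqrt (N * ∑ j, c j ^ 2)
        ≤ Metric.infDist (((∑ j, c j • ψ j : D)) : Lp E 2 μ) (K : Set (Lp E 2 μ)) := by
    intro c
    by_contra hcon
    push_neg at hcon
    obtain ⟨y, hyK, hlt⟩ := (Metric.infDist_lt_iff hKne).1 hcon
    obtain ⟨σ, hσ, rfl⟩ := Submodule.mem_map.1 hyK
    have h1 : N * ∑ j, c j ^ 2 ≤ ‖(((∑ j, c j • ψ j) + (-σ) : D) : Lp E 2 μ)‖ ^ 2 :=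
      key c (-σ) (neg_mem hσ)
    have h2 : (((∑ j, c j • ψ j) + (-σ) : D) : Lp E 2 μ)
        = ((∑ j, c j • ψ j : D) : Lp E 2 μ) - D.subtype σ := by
      push_cast
      simp [sub_eq_add_neg]
    have hdisteq : dist ((∑ j, c j • ψ j : D) : Lp E 2 μ) (D.subtype σ)
        = ‖(((∑ j, c j • ψ j) + (-σ) : D) : Lp E 2 μ)‖ := by
      rw [dist_eq_norm, h2]
    rw [hdisteq] at hlt
    have h3 := Real.sqrt_le_sqrt h1
    rw [Real.sqrt_sq (norm_nonneg _)] at h3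
    exact absurd hlt (not_lt.2 h3)
  -- the span of the ψ's
  set V : Submodule ℝ D := Submodule.span ℝ (Set.range ψ) with hV
  have hVfd : FiniteDimensional ℝ V := FiniteDimensional.span_of_finite ℝ (Set.finite_range ψ)
  have hVrank : Module.finrank ℝ V = k := by
    rw [finrank_span_eq_card hindD, Fintype.card_fin]
  have hVclos : ∀ φ ∈ V, (φ : Lp E 2 μ) ∈ closure (K : Set (Lp E 2 μ)) → φ = 0 := by
    intro φ hφ hcl
    obtain ⟨c, rfl⟩ := (Submodule.mem_span_range_iff_exists_fun ℝ).1 hφ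
    have h0 : Metric.infDist ((∑ j, c j • ψ j : D) : Lp E 2 μ) (K : Set (Lp E 2 μ)) = 0 :=
      Metric.infDist_zero_of_mem_closure hcl
    have h1 := hdist c
    rw [h0] at h1
    have h2 : N * ∑ j, c j ^ 2 ≤ 0 :=
      Real.sqrt_eq_zero'.1 (le_antisymm h1 (Real.sqrt_nonneg _))
    have hc0 := csqzero c h2
    simp [hc0]
  -- orthogonality of the dψ's
  have horth : ∀ i j, i ≠ j → (inner ℝ (d (ψ i)) (d (ψ j)) : ℝ) = 0 := by
    intro i j hij
    rw [MeasureTheory.L2.inner_def]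
    have hz : (fun x => (inner ℝ (d (ψ i) x) (d (ψ j) x) : ℝ)) =ᵐ[μ] fun _ => (0 : ℝ) := by
      filter_upwards [hdsupp i, hdsupp j] with x h1 h2
      by_cases hx : x ∈ B i
      · rw [h2 fun hxj => Set.disjoint_left.1 (hBdisj i j hij) hx hxj, inner_zero_right]
      · rw [h1 hx, inner_zero_left]
    rw [integral_congr_ae hz, integral_zero]
  -- energy upper bound
  have energy : ∀ c : Fin k → ℝ, ‖d (∑ j, c j • ψ j)‖ ^ 2 ≤ E₀ * ∑ j, c j ^ 2 := by
    intro c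
    have hd : d (∑ j, c j • ψ j) = ∑ j, c j • d (ψ j) := by
      simp
    rw [hd, ← real_inner_self_eq_norm_sq, sum_inner]
    have hterm : ∀ i ∈ Finset.univ, (inner ℝ (c i • d (ψ i)) (∑ j, c j • d (ψ j)) : ℝ)
        = c i ^ 2 * ‖d (ψ i)‖ ^ 2 := by
      intro i _
      rw [inner_sum, Finset.sum_eq_single i
        (fun j _ hj => by
          rw [real_inner_smul_left, real_inner_smul_right, horth i j (Ne.symm hj),
            mul_zero, mul_zero])
        (fun h => absurd (Finset.mem_univ i) h),
        real_inner_smul_left, real_inner_smul_right, real_inner_self_eq_norm_sq]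
      ring
    rw [Finset.sum_congr rfl hterm]
    calc ∑ i, c i ^ 2 * ‖d (ψ i)‖ ^ 2 ≤ ∑ i, c i ^ 2 * E₀ :=
        Finset.sum_le_sum fun i _ => mul_le_mul_of_nonneg_left (henergy i) (sq_nonneg _)
      _ = E₀ * ∑ i, c i ^ 2 := by rw [← Finset.sum_mul, mul_comm]
  refine ⟨hindquot, ?_⟩
  -- bound on the sup over V
  have hbound : (⨆ (φ : D) (_ : φ ∈ V ∧ φ ≠ 0),
      ENNReal.ofReal (‖d φ‖ ^ 2 /
        (Metric.infDist (φ : Lp E 2 μ) (K : Set (Lp E 2 μ))) ^ 2))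
      ≤ ENNReal.ofReal (E₀ / N) := by
    refine iSup_le fun φ => iSup_le fun hφ => ?_
    obtain ⟨hφV, hφne⟩ := hφ
    obtain ⟨c, rfl⟩ := (Submodule.mem_span_range_iff_exists_fun ℝ).1 hφV
    have hcs : 0 < ∑ j, c j ^ 2 := by
      rcases (Finset.sum_nonneg fun j (_ : j ∈ Finset.univ) => sq_nonneg (c j)).lt_or_eq
        with h | h
      · exact h
      · exact absurd (by
          have hc0 := csqzero c (by rw [← h]; simp)
          simp [hc0] : (∑ j, c j • ψ j) = 0) hφne
    have h1 : ‖d (∑ j, c j • ψ j)‖ ^ 2 ≤ E₀ * ∑ j, c j ^ 2 := energy c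
    have h2 := hdist c
    have h3 : N * ∑ j, c j ^ 2
        ≤ (Metric.infDist ((∑ j, c j • ψ j : D) : Lp E 2 μ) (K : Set (Lp E 2 μ))) ^ 2 := by
      have h4 := pow_le_pow_left₀ (Real.sqrt_nonneg _) h2 2
      rwa [Real.sq_sqrt (by positivity)] at h4
    apply ENNReal.ofReal_le_ofReal
    have hND : 0 < N * ∑ j, c j ^ 2 := by positivity
    calc ‖d (∑ j, c j • ψ j)‖ ^ 2
          / (Metric.infDist ((∑ j, c j • ψ j : D) : Lp E 2 μ) (K : Set (Lp E 2 μ))) ^ 2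
        ≤ (E₀ * ∑ j, c j ^ 2) / (N * ∑ j, c j ^ 2) :=
          div_le_div₀ (by positivity) h1 hND h3
      _ = E₀ / N := by
          rw [mul_comm E₀, mul_comm N, mul_div_mul_left _ _ (ne_of_gt hcs)]
  have hstep : minMaxValue d k ≤ ⨆ (φ : D) (_ : φ ∈ V ∧ φ ≠ 0),
      ENNReal.ofReal (‖d φ‖ ^ 2 /
        (Metric.infDist (φ : Lp E 2 μ) (K : Set (Lp E 2 μ))) ^ 2) := by
    unfold minMaxValue
    exact iInf₂_le V ⟨hVfd, hVrank, hVclos⟩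
  exact hstep.trans hbound
end

section
/- Let n ≥ 1 and let v : ℝⁿ → ℝⁿ be a Lipschitz map with compact support. Then ∫_{ℝⁿ} div v(x) dx = 0, where div v(x) = Σ_{i=1}^n ⟨Dv(x) e_i, e_i⟩ is the trace of the (almost everywhere defined, by Rademacher's theorem) total derivative Dv(x), and {e_i} is the standard orthonormal basis of ℝⁿ. -/
set_option maxHeartbeats 1000000


open MeasureTheory

/-- For a compactly supported Lipschitz vector field `v : ℝⁿ → ℝⁿ` (`n ≥ 1`), the integral
of its divergence `div v(x) = ∑ᵢ ⟨Dv(x) eᵢ, eᵢ⟩` vanishes, where `Dv` is the (almost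
everywhere defined, by Rademacher's theorem) total derivative. -/
theorem integral_div_eq_zero_of_lipschitz_compact_support
    (n : ℕ) (hn : 1 ≤ n)
    (v : EuclideanSpace ℝ (Fin n) → EuclideanSpace ℝ (Fin n))
    (hv : ∃ L, LipschitzWith L v) (hsupp : HasCompactSupport v) :
    ∫ x, (∑ i, (inner ℝ (fderiv ℝ v x (EuclideanSpace.single i (1:ℝ)))
        (EuclideanSpace.single i (1:ℝ)) : ℝ)) = 0 := by
  classical
  obtain ⟨L, hL⟩ := hv
  set e : Fin n → EuclideanSpace ℝ (Fin n) := fun i => EuclideanSpace.single i (1 : ℝ) with he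
  have hnorm_e : ∀ i, ‖e i‖ = 1 := by
    intro i; rw [he]; rw [EuclideanSpace.norm_single]; norm_num
  have hv_cont : Continuous v := hL.continuous
  -- scalar components
  set f : Fin n → EuclideanSpace ℝ (Fin n) → ℝ := fun i x => inner ℝ (v x) (e i) with hf
  have hf_cont : ∀ i, Continuous (f i) := fun i =>
    hv_cont.inner continuous_const
  have hf_supp : ∀ i, HasCompactSupport (f i) := by
    intro i
    exact hsupp.comp_left (g := fun y : EuclideanSpace ℝ (Fin n) => (inner ℝ y (e i) : ℝ)) (by simp)
  have hf_int : ∀ i, Integrable (f i) := fun i =>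
    (hf_cont i).integrable_of_hasCompactSupport (hf_supp i)
  -- the step sizes
  set u : ℕ → ℝ := fun k => ((k : ℝ) + 1)⁻¹ with hu
  have hu_pos : ∀ k, 0 < u k := by
    intro k; positivity
  have hu_le_one : ∀ k, u k ≤ 1 := by
    intro k
    rw [hu]
    rw [inv_le_one_iff₀]
    right; linarith [Nat.cast_nonneg (α := ℝ) k]
  have hu_tendsto : Filter.Tendsto u Filter.atTop (nhds 0) := by
    simpa [hu] using tendsto_one_div_add_atTop_nhds_zero_nat (𝕜 := ℝ)
  -- difference quotients
  set F : ℕ → EuclideanSpace ℝ (Fin n) → ℝ := fun k x => ∑ i, (u k)⁻¹ * (f i (x + u k • e i) - f i x) with hF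
  -- Step A : each F k has zero integral
  have hshift_int : ∀ (i : Fin n) (c : EuclideanSpace ℝ (Fin n)), Integrable (fun x => f i (x + c)) := by
    intro i c
    exact (hf_int i).comp_add_right c
  have hFk_term_int : ∀ (k : ℕ) (i : Fin n),
      Integrable (fun x => (u k)⁻¹ * (f i (x + u k • e i) - f i x)) := by
    intro k i
    exact ((hshift_int i _).sub (hf_int i)).const_mul _
  have stepA : ∀ k, ∫ x, F k x = 0 := by
    intro k
    rw [hF]
    rw [integral_finset_sum _ (fun i _ => hFk_term_int k i)]
    refine Finset.sum_eq_zero fun i _ => ?_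
    rw [integral_const_mul _ _, integral_sub (hshift_int i _) (hf_int i),
      integral_add_right_eq_self (f i) (u k • e i)]
    simp
  -- Step B : measurability
  have stepB : ∀ k, AEStronglyMeasurable (F k) volume := by
    intro k
    refine Continuous.aestronglyMeasurable ?_
    refine continuous_finset_sum _ fun i _ => ?_
    exact continuous_const.mul
      (((hf_cont i).comp (continuous_id.add continuous_const)).sub (hf_cont i))
  -- Step C : uniform bound
  set K : Set (EuclideanSpace ℝ (Fin n)) := Metric.cthickening 1 (tsupport v) with hK
  have hK_compact : IsCompact K := by
    refine Metric.isCompact_of_isClosed_isBounded Metric.isClosed_cthickening ?_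
    exact hsupp.isBounded.cthickening
  set bound : EuclideanSpace ℝ (Fin n) → ℝ := K.indicator fun _ => (n : ℝ) * L with hbound
  have hbound_int : Integrable bound := by
    refine (integrable_indicator_iff hK_compact.measurableSet).mpr ?_
    exact (integrableOn_const_iff).2 (Or.inr hK_compact.measure_lt_top)
  have h_bound : ∀ k, ∀ᵐ x ∂(volume : Measure (EuclideanSpace ℝ (Fin n))), ‖F k x‖ ≤ bound x := by
    intro k
    refine Filter.Eventually.of_forall fun x => ?_
    by_cases hx : x ∈ K
    · have hterm : ∀ i : Fin n, ‖(u k)⁻¹ * (f i (x + u k • e i) - f i x)‖ ≤ (L : ℝ) := by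
        intro i
        have h1 : ‖f i (x + u k • e i) - f i x‖ ≤ ‖v (x + u k • e i) - v x‖ := by
          have : f i (x + u k • e i) - f i x = inner ℝ (v (x + u k • e i) - v x) (e i) := by
            simp [hf, inner_sub_left]
          rw [this]
          calc ‖(inner ℝ (v (x + u k • e i) - v x) (e i) : ℝ)‖
              ≤ ‖v (x + u k • e i) - v x‖ * ‖e i‖ := norm_inner_le_norm _ _
            _ = ‖v (x + u k • e i) - v x‖ := by rw [hnorm_e i, mul_one]
        have h2 : ‖v (x + u k • e i) - v x‖ ≤ L * u k := by
          have := hL.dist_le_mul (x + u k • e i) x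
          rw [dist_eq_norm, dist_eq_norm] at this
          simpa [norm_smul, abs_of_pos (hu_pos k), hnorm_e i] using this
        rw [norm_mul, norm_inv]
        have h3 : ‖u k‖ = u k := by
          rw [Real.norm_eq_abs, abs_of_pos (hu_pos k)]
        calc ‖u k‖⁻¹ * ‖f i (x + u k • e i) - f i x‖
            ≤ ‖u k‖⁻¹ * (L * u k) := by
              exact mul_le_mul_of_nonneg_left (h1.trans h2) (by positivity)
          _ = (L : ℝ) := by
              rw [h3]; field_simp
              exact mul_div_cancel_left₀ _ (hu_pos k).ne'
      calc ‖F k x‖ ≤ ∑ i, ‖(u k)⁻¹ * (f i (x + u k • e i) - f i x)‖ := norm_sum_le _ _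
        _ ≤ ∑ _i : Fin n, (L : ℝ) := Finset.sum_le_sum fun i _ => hterm i
        _ = (n : ℝ) * L := by simp [mul_comm]
        _ = bound x := by rw [hbound, Set.indicator_of_mem hx]
    · -- x outside K : everything vanishes
      have hvx : v x = 0 := by
        by_contra h
        exact hx (Metric.self_subset_cthickening _ (subset_tsupport v h))
      have hvshift : ∀ i : Fin n, v (x + u k • e i) = 0 := by
        intro i
        by_contra h
        apply hx
        have hmem : x + u k • e i ∈ tsupport v := subset_tsupport v h
        have : dist x (x + u k • e i) ≤ 1 := by
          rw [dist_eq_norm]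
          simp only [sub_add_cancel_left, norm_neg, norm_smul]
          rw [Real.norm_eq_abs, abs_of_pos (hu_pos k), hnorm_e i, mul_one]
          simpa using hu_le_one k
        exact Metric.mem_cthickening_of_dist_le x _ 1 _ hmem this
      have : F k x = 0 := by
        rw [hF]
        refine Finset.sum_eq_zero fun i _ => ?_
        simp [hf, hvx, hvshift i]
      rw [this, hbound, Set.indicator_of_notMem hx]
      simp
  -- Step D : a.e. pointwise convergence (Rademacher)
  have stepD : ∀ᵐ x ∂(volume : Measure (EuclideanSpace ℝ (Fin n))), Filter.Tendsto (fun k => F k x)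
      Filter.atTop (nhds (∑ i, (inner ℝ (fderiv ℝ v x (e i)) (e i) : ℝ))) := by
    filter_upwards [hL.ae_differentiableAt] with x hx
    refine tendsto_finset_sum _ fun i _ => ?_
    -- derivative of t ↦ v (x + t • e i) at 0
    have hline : HasDerivAt (fun t : ℝ => v (x + t • e i)) (fderiv ℝ v x (e i)) 0 := by
      have h1 : HasDerivAt (fun t : ℝ => x + t • e i) (e i) 0 := by
        simpa using ((hasDerivAt_id (0 : ℝ)).smul_const (e i)).const_add x
      have h2 : HasFDerivAt v (fderiv ℝ v x) (x + (0 : ℝ) • e i) := by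
        simpa using hx.hasFDerivAt
      exact h2.comp_hasDerivAt 0 h1
    have hslope := hasDerivAt_iff_tendsto_slope_zero.mp hline
    have hu_ne : ∀ k, u k ≠ 0 := fun k => (hu_pos k).ne'
    have hu_tendsto' : Filter.Tendsto u Filter.atTop (nhdsWithin 0 {t : ℝ | t ≠ 0}) := by
      refine tendsto_nhdsWithin_iff.mpr ⟨hu_tendsto, ?_⟩
      exact Filter.Eventually.of_forall fun k => hu_ne k
    have hcomp := hslope.comp hu_tendsto'
    have hinner := hcomp.inner (𝕜 := ℝ) (tendsto_const_nhds (x := e i))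
    refine hinner.congr fun k => ?_
    simp only [Function.comp_apply, zero_add]
    rw [real_inner_smul_left]
    simp [hf, inner_sub_left]
  -- conclude by dominated convergence
  have hDCT := tendsto_integral_of_dominated_convergence bound stepB hbound_int h_bound stepD
  simp only [stepA] at hDCT
  exact tendsto_nhds_unique hDCT tendsto_const_nhds
end
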